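/- Let F : [0,1]^n → ℝ≥0 be continuously differentiable with F(0)=0, let M ⊆ [0,1]^n, let x* ∈ M with value OPT = F(x*), and suppose x : [0,1] → [0,1]^n is a C¹ trajectory with x(0)=0 whose derivative satisfies ⟨x′(t), ∇F(x(t))⟩ ≥ τ·(OPT − F(x(t))) for all t ∈ [0,1], for some τ ∈ (0,1]. Then F(x(t)) ≥ (1 − e^{−τt})·OPT for all t ∈ [0,1]; in particular F(x(1)) ≥ (1 − e^{−τ})·OPT. -/

import Mathlib

/-- continuous-time ATCG guarantee: If `F` is `C¹`, nonnegative on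
`[0,1]^n`, `F 0 = 0`, `x* ∈ M ⊆ [0,1]^n`, `OPT = F x*`, and the trajectory
`x : [0,1] → [0,1]^n` with `x 0 = 0` satisfies
`⟨x′(t), ∇F(x(t))⟩ ≥ τ·(OPT − F(x(t)))` on `[0,1]` for some `τ ∈ (0,1]`, then
`F(x(t)) ≥ (1 − e^{−τt})·OPT` for all `t ∈ [0,1]`; in particular
`F(x(1)) ≥ (1 − e^{−τ})·OPT`. -/
theorem atcg_continuous_guarantee (n : ℕ) (F : (Fin n → ℝ) → ℝ) (τ : ℝ)
    (hτ0 : 0 < τ) (hτ1 : τ ≤ 1)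
    (hF : ContDiff ℝ 1 F)
    (hFnn : ∀ y : Fin n → ℝ, (∀ p, y p ∈ Set.Icc (0 : ℝ) 1) → 0 ≤ F y)
    (hF0 : F 0 = 0)
    (M : Set (Fin n → ℝ)) (hM : M ⊆ {y | ∀ p, y p ∈ Set.Icc (0 : ℝ) 1})
    (xstar : Fin n → ℝ) (hxstar : xstar ∈ M)
    (x x' : ℝ → Fin n → ℝ)
    (hx0 : x 0 = 0)
    (hxbox : ∀ t ∈ Set.Icc (0 : ℝ) 1, ∀ p, x t p ∈ Set.Icc (0 : ℝ) 1)
    (hxderiv : ∀ t ∈ Set.Icc (0 : ℝ) 1, HasDerivAt x (x' t) t)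
    (hineq : ∀ t ∈ Set.Icc (0 : ℝ) 1,
      fderiv ℝ F (x t) (x' t) ≥ τ * (F xstar - F (x t))) :
    (∀ t ∈ Set.Icc (0 : ℝ) 1, F (x t) ≥ (1 - Real.exp (-τ * t)) * F xstar) ∧
    F (x 1) ≥ (1 - Real.exp (-τ)) * F xstar := by
  set OPT := F xstar with hOPT
  -- the auxiliary function h
  set h : ℝ → ℝ := fun t => Real.exp (τ * t) * (F (x t) - OPT) with hh
  -- derivative of h at points of [0,1]
  have hhderiv : ∀ t ∈ Set.Icc (0 : ℝ) 1, HasDerivAt h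
      (τ * Real.exp (τ * t) * (F (x t) - OPT)
        + Real.exp (τ * t) * fderiv ℝ F (x t) (x' t)) t := by
    intro t ht
    have hg : HasDerivAt (fun s => F (x s)) (fderiv ℝ F (x t) (x' t)) t := by
      have hFd : HasFDerivAt F (fderiv ℝ F (x t)) (x t) :=
        (hF.differentiable one_ne_zero (x t)).hasFDerivAt
      exact hFd.comp_hasDerivAt t (hxderiv t ht)
    have he : HasDerivAt (fun s => Real.exp (τ * s)) (τ * Real.exp (τ * t)) t := by
      have := (Real.hasDerivAt_exp (τ * t)).comp t ((hasDerivAt_id t).const_mul τ)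
      simpa [mul_comm, Function.comp_def] using this
    have := he.mul (hg.sub_const OPT)
    simpa [hh, mul_comm, mul_left_comm, mul_assoc, Pi.mul_def] using this
  -- h is monotone on [0,1]
  have hmono : MonotoneOn h (Set.Icc (0 : ℝ) 1) := by
    apply monotoneOn_of_deriv_nonneg (convex_Icc 0 1)
    · exact fun t ht => (hhderiv t ht).continuousAt.continuousWithinAt
    · intro t ht
      rw [interior_Icc] at ht
      exact ((hhderiv t (Set.mem_Icc_of_Ioo ht)).differentiableAt).differentiableWithinAt
    · intro t ht
      rw [interior_Icc] at ht
      have ht' : t ∈ Set.Icc (0 : ℝ) 1 := Set.mem_Icc_of_Ioo ht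
      rw [(hhderiv t ht').deriv]
      have h1 := hineq t ht'
      have h2 : (0:ℝ) < Real.exp (τ * t) := Real.exp_pos _
      nlinarith [mul_le_mul_of_nonneg_left h1 h2.le]
  -- value at 0
  have hh0 : h 0 = -OPT := by
    simp [hh, hx0, hF0]
  have key : ∀ t ∈ Set.Icc (0 : ℝ) 1, F (x t) ≥ (1 - Real.exp (-τ * t)) * OPT := by
    intro t ht
    have h0mem : (0:ℝ) ∈ Set.Icc (0:ℝ) 1 := by constructor <;> norm_num
    have := hmono h0mem ht ht.1
    rw [hh0] at this
    simp only [hh] at this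
    have hE : Real.exp (-τ * t) * Real.exp (τ * t) = 1 := by
      rw [← Real.exp_add]; ring_nf; exact Real.exp_zero
    have h2 : (0:ℝ) < Real.exp (τ * t) := Real.exp_pos _
    have h3 : (0:ℝ) < Real.exp (-τ * t) := Real.exp_pos _
    have h4 := mul_le_mul_of_nonneg_left this h3.le
    have h5 : Real.exp (-τ * t) * (Real.exp (τ * t) * (F (x t) - OPT))
        = F (x t) - OPT := by rw [← mul_assoc, hE, one_mul]
    rw [h5] at h4
    nlinarith [h4]
  refine ⟨key, ?_⟩
  have h1mem : (1:ℝ) ∈ Set.Icc (0:ℝ) 1 := by constructor <;> norm_num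
  have := key 1 h1mem
  simpa using this
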